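/- arXiv:2011.06702 — 3 statements merged into one kernel-verified Lean document; each statement's English description precedes it below -/
import Mathlib

section
/- Suppose a sequence θ_{k+1} = θ_k - η U_k in ℝ^d (with η > 0) satisfies, for all k < T, the regularity inequality ⟨θ_k - θ_T, U_k⟩ ≥ (η/2)‖U_k‖² + γ·(ℓ_k - ℓ*) where γ > 0 and ℓ_k ≥ ℓ* for all k. Then the average optimality gap satisfies (1/T)·∑_{k=0}^{T-1} (ℓ_k - ℓ*) ≤ ‖θ_0 - θ_T‖² / (2·η·γ·T). -/
open scoped RealInnerProductSpace BigOperators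

theorem regularity_principle_convergence {d : ℕ} (T : ℕ) (hT : 1 ≤ T)
    (η γ : ℝ) (hη : 0 < η) (hγ : 0 < γ)
    (θ U : ℕ → EuclideanSpace ℝ (Fin d)) (ℓ : ℕ → ℝ) (lstar : ℝ)
    (hupd : ∀ k, θ (k + 1) = θ k - η • U k)
    (hlb : ∀ k, lstar ≤ ℓ k)
    (hreg : ∀ k < T, ⟪θ k - θ T, U k⟫ ≥ (η / 2) * ‖U k‖ ^ 2 + γ * (ℓ k - lstar)) :
    (1 / (T : ℝ)) * ∑ k ∈ Finset.range T, (ℓ k - lstar) ≤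
      ‖θ 0 - θ T‖ ^ 2 / (2 * η * γ * T) := by
  set f : ℕ → ℝ := fun k => ‖θ k - θ T‖ ^ 2 with hf
  have step : ∀ k < T, 2 * η * γ * (ℓ k - lstar) ≤ f k - f (k + 1) := by
    intro k hk
    have h1 := hreg k hk
    have h2 : θ (k + 1) - θ T = (θ k - θ T) - η • U k := by
      rw [hupd k]; abel
    have h3 : f (k + 1) = f k - 2 * (η * ⟪θ k - θ T, U k⟫) + η ^ 2 * ‖U k‖ ^ 2 := by
      simp only [hf]
      rw [h2, norm_sub_sq_real]
      simp only [real_inner_smul_right, norm_smul, Real.norm_eq_abs, mul_pow, sq_abs]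

    nlinarith [h1]
  have sum_step : 2 * η * γ * ∑ k ∈ Finset.range T, (ℓ k - lstar) ≤ f 0 - f T := by
    rw [← Finset.sum_range_sub' f T, Finset.mul_sum]
    exact Finset.sum_le_sum fun k hk => step k (Finset.mem_range.mp hk)
  have hfT : f T = 0 := by simp [hf]
  have key : 2 * η * γ * ∑ k ∈ Finset.range T, (ℓ k - lstar) ≤ ‖θ 0 - θ T‖ ^ 2 := by
    have := sum_step; rw [hfT] at this; simpa [hf] using this
  have hT' : (0:ℝ) < T := by exact_mod_cast hT
  have hTne : (T:ℝ) ≠ 0 := ne_of_gt hT'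
  rw [le_div_iff₀ (by positivity)]
  calc (1 / (T:ℝ)) * (∑ k ∈ Finset.range T, (ℓ k - lstar)) * (2 * η * γ * T)
      = 2 * η * γ * ∑ k ∈ Finset.range T, (ℓ k - lstar) := by field_simp
    _ ≤ ‖θ 0 - θ T‖ ^ 2 := key
end

section
/- Let f : ℝ^d → ℝ be convex and differentiable with a global minimizer θ*, and consider gradient descent θ_{k+1} = θ_k - η∇f(θ_k) with η > 0. If for all k < T we have ⟨θ_k - θ*, ∇f(θ_k)⟩ ≥ (η/2)‖∇f(θ_k)‖² + γ(f(θ_k) - f(θ*)) with γ > 0 (the regularity principle anchored at θ* instead of θ_T), then (1/T)∑_{k=0}^{T-1}(f(θ_k) - f(θ*)) ≤ ‖θ_0 - θ*‖²/(2ηγT). -/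
open scoped RealInnerProductSpace BigOperators

theorem regularity_gradient_descent {d : ℕ} (T : ℕ) (hT : 1 ≤ T)
    (η γ : ℝ) (hη : 0 < η) (hγ : 0 < γ)
    (f : EuclideanSpace ℝ (Fin d) → ℝ) (hconv : ConvexOn ℝ Set.univ f)
    (hdiff : Differentiable ℝ f)
    (θstar : EuclideanSpace ℝ (Fin d)) (hmin : ∀ θ', f θstar ≤ f θ')
    (θ : ℕ → EuclideanSpace ℝ (Fin d))
    (hupd : ∀ k, θ (k + 1) = θ k - η • gradient f (θ k))
    (hreg : ∀ k < T, ⟪θ k - θstar, gradient f (θ k)⟫ ≥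
        (η / 2) * ‖gradient f (θ k)‖ ^ 2 + γ * (f (θ k) - f θstar)) :
    (1 / (T : ℝ)) * ∑ k ∈ Finset.range T, (f (θ k) - f θstar) ≤
      ‖θ 0 - θstar‖ ^ 2 / (2 * η * γ * T) := by
  set a : ℕ → ℝ := fun k => ‖θ k - θstar‖ ^ 2 with ha
  have key : ∀ k < T, 2 * η * γ * (f (θ k) - f θstar) ≤ a k - a (k + 1) := by
    intro k hk
    have hreg' := hreg k hk
    have hstep : θ (k + 1) - θstar = (θ k - θstar) - η • gradient f (θ k) := by
      rw [hupd k]; abel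
    have hnorm : a (k + 1) =
        a k - 2 * (η * ⟪θ k - θstar, gradient f (θ k)⟫) + η ^ 2 * ‖gradient f (θ k)‖ ^ 2 := by
      simp only [ha, hstep]
      rw [norm_sub_sq_real, real_inner_smul_right, norm_smul]
      simp [abs_of_pos hη, mul_pow]
    nlinarith [sq_nonneg ‖gradient f (θ k)‖, hη.le, hγ.le]
  have hsum : ∑ k ∈ Finset.range T, 2 * η * γ * (f (θ k) - f θstar) ≤ a 0 := by
    calc ∑ k ∈ Finset.range T, 2 * η * γ * (f (θ k) - f θstar)
        ≤ ∑ k ∈ Finset.range T, (a k - a (k + 1)) := by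
          apply Finset.sum_le_sum
          intro k hk
          exact key k (Finset.mem_range.mp hk)
      _ = a 0 - a T := Finset.sum_range_sub' a T
      _ ≤ a 0 := by
          have : (0:ℝ) ≤ a T := sq_nonneg _
          linarith
  have hmul : (2 * η * γ) * ∑ k ∈ Finset.range T, (f (θ k) - f θstar) ≤ a 0 := by
    rw [Finset.mul_sum]; exact hsum
  have hT' : (0:ℝ) < T := by exact_mod_cast hT
  have hpos : (0:ℝ) < 2 * η * γ * T := by positivity
  have heq : (1 / (T:ℝ)) * ∑ k ∈ Finset.range T, (f (θ k) - f θstar) =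
      (2 * η * γ * ∑ k ∈ Finset.range T, (f (θ k) - f θstar)) / (2 * η * γ * T) := by
    field_simp
  rw [heq]
  gcongr
end

section
/- Suppose θ_{k+1} = θ_k - η U_k with η > 0 satisfies, for all k < T, the regularity principle ⟨θ_k - θ_T, U_k⟩ ≥ (η/2)‖U_k‖² + γ (ℓ_k(θ_k) - m_k), where γ > 0, ℓ_k : ℝ^d → ℝ, and m_k = inf_θ ℓ_k(θ). Suppose further that indices k are partitioned into B epochs of size n (T = nB) such that ∑ over each epoch of m_k equals n·F* where F* = inf_θ (1/n)∑_i ℓ^{(i)}(θ) for the underlying sample losses ℓ^{(i)} (over-parameterization). Then (1/T)∑_{k=0}^{T-1} ℓ_k(θ_k) - F* ≤ ‖θ_0 - θ_T‖²/(2ηγT). -/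
open scoped RealInnerProductSpace BigOperators

theorem regularity_principle_convergence_full {d n B : ℕ} (hn : 1 ≤ n) (hB : 1 ≤ B)
    (T : ℕ) (hT : T = n * B) (η γ : ℝ) (hη : 0 < η) (hγ : 0 < γ)
    (θ U : ℕ → EuclideanSpace ℝ (Fin d))
    (ℓ : ℕ → EuclideanSpace ℝ (Fin d) → ℝ) (m : ℕ → ℝ)
    (ℓsample : Fin n → EuclideanSpace ℝ (Fin d) → ℝ) (Fstar : ℝ)
    (hm : ∀ k, m k = ⨅ θ', ℓ k θ')
    (hF : Fstar = ⨅ θ', (1 / (n : ℝ)) * ∑ i, ℓsample i θ')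
    (hupd : ∀ k, θ (k + 1) = θ k - η • U k)
    (hepoch : ∀ b < B, ∑ k ∈ Finset.Ico (n * b) (n * (b + 1)), m k = (n : ℝ) * Fstar)
    (hreg : ∀ k < T, ⟪θ k - θ T, U k⟫ ≥
        (η / 2) * ‖U k‖ ^ 2 + γ * (ℓ k (θ k) - m k)) :
    (1 / (T : ℝ)) * ∑ k ∈ Finset.range T, ℓ k (θ k) - Fstar ≤
      ‖θ 0 - θ T‖ ^ 2 / (2 * η * γ * T) := by
  have hTpos : 0 < T := by
    rw [hT]; exact Nat.mul_pos hn hB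
  have hTR : (0 : ℝ) < T := by exact_mod_cast hTpos
  -- per-step inequality
  set g : ℕ → ℝ := fun k => ‖θ k - θ T‖ ^ 2 with hg
  have hstep : ∀ k < T, 2 * η * γ * (ℓ k (θ k) - m k) ≤ g k - g (k + 1) := by
    intro k hk
    have h1 : θ (k + 1) - θ T = (θ k - θ T) - η • U k := by
      rw [hupd k]; abel
    have h2 : g (k + 1) = g k - 2 * (η * ⟪θ k - θ T, U k⟫) + η ^ 2 * ‖U k‖ ^ 2 := by
      simp only [hg, h1]
      rw [norm_sub_sq_real, real_inner_smul_right, norm_smul]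
      rw [mul_pow]
      simp [abs_of_pos hη]
      try ring
    have h3 := hreg k hk
    nlinarith [sq_nonneg ‖U k‖]
  -- telescoping sum
  have htel : ∑ k ∈ Finset.range T, (g k - g (k + 1)) = g 0 - g T :=
    Finset.sum_range_sub' g T
  have hgT : g T = 0 := by simp [hg]
  have hsum1 : 2 * η * γ * ∑ k ∈ Finset.range T, (ℓ k (θ k) - m k) ≤ g 0 := by
    rw [Finset.mul_sum]
    calc ∑ k ∈ Finset.range T, 2 * η * γ * (ℓ k (θ k) - m k)
        ≤ ∑ k ∈ Finset.range T, (g k - g (k + 1)) := by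
          apply Finset.sum_le_sum
          intro k hk
          exact hstep k (Finset.mem_range.mp hk)
      _ = g 0 := by rw [htel, hgT]; ring
  -- sum of m
  have hmsum : ∀ b ≤ B, ∑ k ∈ Finset.range (n * b), m k = (b : ℝ) * ((n : ℝ) * Fstar) := by
    intro b hb
    induction b with
    | zero => simp
    | succ b ih =>
      have hb' : b ≤ B := Nat.le_of_succ_le hb
      have hrange : Finset.range (n * (b + 1)) =
          Finset.Ico 0 (n * b) ∪ Finset.Ico (n * b) (n * (b + 1)) := by
        rw [Finset.Ico_union_Ico_eq_Ico (Nat.zero_le _)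
          (Nat.mul_le_mul_left n (Nat.le_succ b)), Finset.range_eq_Ico]
      rw [hrange, Finset.sum_union]
      · rw [← Finset.range_eq_Ico, ih hb', hepoch b hb]
        push_cast; ring
      · apply Finset.Ico_disjoint_Ico_consecutive
  have hmT : ∑ k ∈ Finset.range T, m k = (T : ℝ) * Fstar := by
    rw [hT, hmsum B le_rfl]
    push_cast; ring
  -- combine
  have hsum2 : ∑ k ∈ Finset.range T, (ℓ k (θ k) - m k) =
      ∑ k ∈ Finset.range T, ℓ k (θ k) - (T : ℝ) * Fstar := by
    rw [Finset.sum_sub_distrib, hmT]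
  rw [hsum2] at hsum1
  have h2 : (0:ℝ) < 2 * η * γ := by positivity
  have hA : ∑ k ∈ Finset.range T, ℓ k (θ k) - (T : ℝ) * Fstar ≤ g 0 / (2 * η * γ) := by
    rw [le_div_iff₀ h2]; nlinarith [hsum1]
  have hfin : (1 / (T : ℝ)) * ∑ k ∈ Finset.range T, ℓ k (θ k) - Fstar =
      (∑ k ∈ Finset.range T, ℓ k (θ k) - (T : ℝ) * Fstar) / T := by
    field_simp
  rw [hfin, show (2 * η * γ * (T:ℝ)) = (2 * η * γ) * T from by ring, ← div_div]
  exact div_le_div_of_nonneg_right hA hTR.le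
end
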